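/- Let p,q,r be complex polynomials of degree ≤ 2 and set p̂=[q,r], q̂=[r,p], r̂=[p,q]. Then Res(p̂,q̂) = Δ(p,q,r)²·Discr(r), Res(p̂,r̂) = Δ(p,q,r)²·Discr(q), and Res(q̂,r̂) = Δ(p,q,r)²·Discr(p). -/
import Mathlib


open Polynomial

/-- The polynomial bracket `[p,q] = p'q - pq'`. -/
noncomputable def pbr (p q : ℂ[X]) : ℂ[X] := derivative p * q - p * derivative q

/-- `Discr(p) = p₁² - 4 p₀ p₂`. -/
noncomputable def pdiscr (p : ℂ[X]) : ℂ := (p.coeff 1) ^ 2 - 4 * p.coeff 0 * p.coeff 2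

/-- `Res(p,q) = (p₂q₀ - p₀q₂)² + (p₂q₁ - p₁q₂)(p₀q₁ - p₁q₀)`. -/
noncomputable def pres (p q : ℂ[X]) : ℂ :=
  (p.coeff 2 * q.coeff 0 - p.coeff 0 * q.coeff 2) ^ 2 +
    (p.coeff 2 * q.coeff 1 - p.coeff 1 * q.coeff 2) *
      (p.coeff 0 * q.coeff 1 - p.coeff 1 * q.coeff 0)

/-- `Δ(p,q,r)`: determinant of the 3×3 matrix of coefficients of `p, q, r`. -/
noncomputable def pdelta (p q r : ℂ[X]) : ℂ :=
  Matrix.det !![p.coeff 0, q.coeff 0, r.coeff 0;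
                p.coeff 1, q.coeff 1, r.coeff 1;
                p.coeff 2, q.coeff 2, r.coeff 2]

lemma pdelta_eq (p q r : ℂ[X]) : pdelta p q r =
    p.coeff 0 * (q.coeff 1 * r.coeff 2 - q.coeff 2 * r.coeff 1)
    - q.coeff 0 * (p.coeff 1 * r.coeff 2 - p.coeff 2 * r.coeff 1)
    + r.coeff 0 * (p.coeff 1 * q.coeff 2 - p.coeff 2 * q.coeff 1) := by
  simp [pdelta, Matrix.det_fin_three]
  ring

lemma pbr_c0 (p q : ℂ[X]) :
    (pbr p q).coeff 0 = p.coeff 1 * q.coeff 0 - p.coeff 0 * q.coeff 1 := by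
  simp [pbr, coeff_mul, Finset.Nat.sum_antidiagonal_eq_sum_range_succ_mk,
    Finset.sum_range_succ, coeff_derivative]

lemma pbr_c1 (p q : ℂ[X]) :
    (pbr p q).coeff 1 = 2 * (p.coeff 2 * q.coeff 0 - p.coeff 0 * q.coeff 2) := by
  simp [pbr, coeff_mul, Finset.Nat.sum_antidiagonal_eq_sum_range_succ_mk,
    Finset.sum_range_succ, coeff_derivative]
  ring

lemma pbr_c2 (p q : ℂ[X]) (hp : p.degree ≤ 2) (hq : q.degree ≤ 2) :
    (pbr p q).coeff 2 = p.coeff 2 * q.coeff 1 - p.coeff 1 * q.coeff 2 := by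
  have hp3 : p.coeff 3 = 0 := coeff_eq_zero_of_degree_lt (lt_of_le_of_lt hp (by norm_num))
  have hq3 : q.coeff 3 = 0 := coeff_eq_zero_of_degree_lt (lt_of_le_of_lt hq (by norm_num))
  simp [pbr, coeff_mul, Finset.Nat.sum_antidiagonal_eq_sum_range_succ_mk,
    Finset.sum_range_succ, coeff_derivative, hp3, hq3]
  ring

set_option maxHeartbeats 1000000 in
theorem res_hat_identities (p q r : ℂ[X])
    (hp : p.degree ≤ 2) (hq : q.degree ≤ 2) (hr : r.degree ≤ 2) :
    pres (pbr q r) (pbr r p) = (pdelta p q r) ^ 2 * pdiscr r ∧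
    pres (pbr q r) (pbr p q) = (pdelta p q r) ^ 2 * pdiscr q ∧
    pres (pbr r p) (pbr p q) = (pdelta p q r) ^ 2 * pdiscr p := by
  refine ⟨?_, ?_, ?_⟩ <;>
    simp only [pres, pdiscr, pdelta_eq,
      pbr_c0, pbr_c1, pbr_c2 q r hq hr, pbr_c2 r p hr hp, pbr_c2 p q hp hq] <;>
    ring
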